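/- Let Γ be a group acting properly discontinuously by homeomorphisms on a topological space X, let π ≤ Γ be a subgroup, let C ⊆ X be compact, and set A := π·C. Assume that: (i) χ : X → ℝ is π-invariant, i.e. χ(h·x) = χ(x) for all h ∈ π and x ∈ X; (ii) χ is constant on each connected component of X ∖ A; (iii) every compact subset of X is contained in a compact connected subset of X. Then for every compact subset K ⊆ X, the quantity sup_{x₁,x₂ ∈ K} |χ(γ⁻¹·x₁) − χ(γ⁻¹·x₂)| depends only on the coset γπ ∈ Γ/π, and there are only finitely many cosets γπ ∈ Γ/π for which this supremum is nonzero; equivalently, for all but finitely many cosets γπ ∈ Γ/π the function x ↦ χ(γ⁻¹·x) is constant on K. -/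

import Mathlib

open Pointwise

/-- (Lemma 3.3 of the paper, abstract form.)
Let `Γ` act properly discontinuously by homeomorphisms on a topological space `X`,
let `π ≤ Γ`, let `C ⊆ X` be compact and `A := π · C`.  Assume
(i) `χ : X → ℝ` is `π`-invariant,
(ii) `χ` is constant on each connected component of `X \ A`, and
(iii) every compact subset of `X` is contained in a compact connected subset.
Then for every compact `K ⊆ X` the quantity
`sup_{x₁,x₂ ∈ K} |χ(γ⁻¹ • x₁) − χ(γ⁻¹ • x₂)|` depends only on the coset `γπ ∈ Γ/π`,
and for all but finitely many cosets `γπ` the function `x ↦ χ(γ⁻¹ • x)` is constant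
on `K` (i.e. the supremum above is nonzero for only finitely many cosets). -/
theorem finitelyManyCosets_nonconstant
    {Γ X : Type*} [Group Γ] [TopologicalSpace X] [MulAction Γ X]
    (hcont : ∀ γ : Γ, Continuous fun x : X => γ • x)
    (hproper : ∀ K L : Set X, IsCompact K → IsCompact L →
      {γ : Γ | ((γ • K) ∩ L).Nonempty}.Finite)
    (π : Subgroup Γ) (C : Set X) (hC : IsCompact C)
    (A : Set X) (hA : A = {x : X | ∃ h ∈ π, ∃ c ∈ C, x = h • c})
    (χ : X → ℝ)
    (hinv : ∀ (h : Γ), h ∈ π → ∀ x : X, χ (h • x) = χ x)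
    (hconst : ∀ x ∈ Aᶜ, ∀ y ∈ connectedComponentIn Aᶜ x, χ y = χ x)
    (hconn : ∀ K : Set X, IsCompact K → ∃ K' : Set X,
      IsCompact K' ∧ IsConnected K' ∧ K ⊆ K') :
    ∀ K : Set X, IsCompact K →
      (∀ γ₁ γ₂ : Γ, (QuotientGroup.mk γ₁ : Γ ⧸ π) = QuotientGroup.mk γ₂ →
        sSup {r : ℝ | ∃ x₁ ∈ K, ∃ x₂ ∈ K, r = |χ (γ₁⁻¹ • x₁) - χ (γ₁⁻¹ • x₂)|} =
        sSup {r : ℝ | ∃ x₁ ∈ K, ∃ x₂ ∈ K, r = |χ (γ₂⁻¹ • x₁) - χ (γ₂⁻¹ • x₂)|}) ∧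
      {z : Γ ⧸ π | ∃ γ : Γ, (QuotientGroup.mk γ : Γ ⧸ π) = z ∧
        ¬ (∀ x₁ ∈ K, ∀ x₂ ∈ K, χ (γ⁻¹ • x₁) = χ (γ⁻¹ • x₂))}.Finite := by
  intro K hK
  constructor
  · intro γ₁ γ₂ hq
    have hmem : γ₁⁻¹ * γ₂ ∈ π := QuotientGroup.eq.mp hq
    have key : ∀ x : X, χ (γ₂⁻¹ • x) = χ (γ₁⁻¹ • x) := by
      intro x
      have := hinv (γ₁⁻¹ * γ₂) hmem (γ₂⁻¹ • x)
      rw [smul_smul, mul_assoc, mul_inv_cancel, mul_one] at this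
      exact this.symm
    have : {r : ℝ | ∃ x₁ ∈ K, ∃ x₂ ∈ K, r = |χ (γ₁⁻¹ • x₁) - χ (γ₁⁻¹ • x₂)|} =
        {r : ℝ | ∃ x₁ ∈ K, ∃ x₂ ∈ K, r = |χ (γ₂⁻¹ • x₁) - χ (γ₂⁻¹ • x₂)|} := by
      ext r
      constructor <;> rintro ⟨x₁, h1, x₂, h2, rfl⟩ <;>
        exact ⟨x₁, h1, x₂, h2, by rw [key, key]⟩
    rw [this]
  · obtain ⟨K', hK'c, hK'conn, hKK'⟩ := hconn K hK
    have hS : {γ : Γ | ((γ • C) ∩ K').Nonempty}.Finite := hproper C K' hC hK'c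
    refine Set.Finite.subset (hS.image (QuotientGroup.mk : Γ → Γ ⧸ π)) ?_
    rintro z ⟨γ, rfl, hnc⟩
    by_cases hmeet : ∃ h ∈ π, ∃ c ∈ C, γ • (h • c) ∈ K'
    · obtain ⟨h, hh, c, hc, hm⟩ := hmeet
      refine ⟨γ * h, ⟨(γ * h) • c, ?_, ?_⟩, ?_⟩
      · exact Set.smul_mem_smul_set hc
      · rwa [mul_smul]
      · exact (QuotientGroup.eq.mpr (by simpa using hh)).symm
    · exfalso
      push_neg at hmeet
      -- γ⁻¹ • K' is disjoint from A
      set T : Set X := (fun x => γ⁻¹ • x) '' K' with hT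
      have hTA : T ⊆ Aᶜ := by
        rintro y ⟨w, hw, rfl⟩ hyA
        rw [hA] at hyA
        obtain ⟨h, hh, c, hc, hEq⟩ := hyA
        have : γ • (h • c) ∈ K' := by
          rw [← hEq, smul_smul, mul_inv_cancel, one_smul]; exact hw
        exact hmeet h hh c hc this
      have hTconn : IsPreconnected T :=
        hK'conn.isPreconnected.image _ (hcont γ⁻¹).continuousOn
      obtain ⟨w₀, hw₀⟩ := hK'conn.nonempty
      have hx₀T : γ⁻¹ • w₀ ∈ T := ⟨w₀, hw₀, rfl⟩
      have hsub : T ⊆ connectedComponentIn Aᶜ (γ⁻¹ • w₀) :=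
        hTconn.subset_connectedComponentIn hx₀T hTA
      apply hnc
      intro x₁ h1 x₂ h2
      have m1 : γ⁻¹ • x₁ ∈ T := ⟨x₁, hKK' h1, rfl⟩
      have m2 : γ⁻¹ • x₂ ∈ T := ⟨x₂, hKK' h2, rfl⟩
      rw [hconst _ (hTA hx₀T) _ (hsub m1), hconst _ (hTA hx₀T) _ (hsub m2)]
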